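/- Under the conditions of the previous identity (Miao-Tam critical metric, harmonic Weyl, regular point, adapted frame), the squared norm of the traceless Ricci tensor satisfies |Ric̊|² = n/(n-1)·R̊₁₁² + ((n-2)/(n-1))²·|Wᵛ|², where |Wᵛ|² = Σ_{i,j≥2} W_{i1j1}². -/

import Mathlib

/-- In the setting of the previous identity (Miao-Tam critical
metric, harmonic Weyl, regular point, adapted frame `e₁ = -∇f/|∇f|`), the
squared norm of the traceless Ricci tensor satisfies
`|Ric̊|² = n/(n-1)·R̊₁₁² + ((n-2)/(n-1))²·|Wᵛ|²`, where
`|Wᵛ|² = ∑_{i,j ≥ 2} W_{i1j1}²`. -/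
theorem norm_traceless_ricci_decomposition (n : ℕ) (hn : 3 ≤ n)
    (e1 : Fin n)
    (Rt : Fin n → Fin n → ℝ)
    (W : Fin n → Fin n → Fin n → Fin n → ℝ)
    (hsym : ∀ i j, Rt i j = Rt j i)
    -- ∇f is a Ricci eigenvector: R̊_{1a} = 0 for a ≥ 2
    (h1a : ∀ a, a ≠ e1 → Rt e1 a = 0)
    -- antisymmetry of Weyl in the first two indices
    (hWanti : ∀ i j k l, W i j k l = - W j i k l)
    -- trace-freeness of Weyl: ∑ᵢ W_{i1i1} = 0
    (hWtf : ∑ i, W i e1 i e1 = 0)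
    -- the identity R̊_{ij} + (R̊₁₁/(n-1))g_{ij} + ((n-2)/(n-1))W_{i1j1} = 0, i,j ≥ 2
    (hkey : ∀ i j, i ≠ e1 → j ≠ e1 →
      Rt i j + Rt e1 e1 / ((n : ℝ) - 1) * (if i = j then 1 else 0)
        + ((n : ℝ) - 2) / ((n : ℝ) - 1) * W i e1 j e1 = 0) :
    ∑ i, ∑ j, (Rt i j) ^ 2
      = (n : ℝ) / ((n : ℝ) - 1) * (Rt e1 e1) ^ 2
        + (((n : ℝ) - 2) / ((n : ℝ) - 1)) ^ 2
          * ∑ i ∈ Finset.univ.filter (fun i => i ≠ e1),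
              ∑ j ∈ Finset.univ.filter (fun j => j ≠ e1), (W i e1 j e1) ^ 2 := by
  have hn3 : (3:ℝ) ≤ (n:ℝ) := by exact_mod_cast hn
  have hc : ((n:ℝ) - 1) ≠ 0 := by linarith
  set A := Rt e1 e1 with hA
  set c := ((n:ℝ) - 1) with hcdef
  set B := ((n:ℝ) - 2) / c with hB
  have hW0 : W e1 e1 e1 e1 = 0 := by have := hWanti e1 e1 e1 e1; linarith
  have hS : (Finset.univ.filter (fun i : Fin n => i ≠ e1)) = Finset.univ.erase e1 :=
    Finset.filter_ne' _ _
  have hcard : ((Finset.univ.erase e1).card : ℝ) = c := by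
    rw [Finset.card_erase_of_mem (Finset.mem_univ _), Finset.card_univ, Fintype.card_fin]
    rw [hcdef]
    have : 1 ≤ n := by omega
    push_cast [this]
    ring
  have hdiag : ∑ i ∈ Finset.univ.erase e1, W i e1 i e1 = 0 := by
    have h := Finset.sum_erase_add Finset.univ (fun i => W i e1 i e1) (Finset.mem_univ e1)
    simp only [hWtf, hW0] at h
    linarith
  have hrow : ∀ i, i ≠ e1 → Rt i e1 = 0 := fun i hi => by rw [hsym]; exact h1a i hi
  -- expand entries in the off-e1 block
  have key2 : ∀ i ∈ Finset.univ.erase e1, ∀ j ∈ Finset.univ.erase e1,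
      Rt i j ^ 2 = (A / c) ^ 2 * (if i = j then 1 else 0)
        + (2 * (A / c) * B) * ((if i = j then 1 else 0) * W i e1 j e1)
        + B ^ 2 * (W i e1 j e1) ^ 2 := by
    intro i hi j hj
    have h := hkey i j (Finset.ne_of_mem_erase hi) (Finset.ne_of_mem_erase hj)
    by_cases hij : i = j
    · subst hij
      simp only [if_pos rfl, if_true, ite_true] at h ⊢
      norm_num at h ⊢
      have hR : Rt i i = -(A / c) - B * W i e1 i e1 := by linarith
      rw [hR]; ring
    · simp only [if_neg hij] at h ⊢
      have hR : Rt i j = -(B * W i e1 j e1) := by linarith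
      rw [hR]; ring
  -- the block sum
  have hblock : ∑ i ∈ Finset.univ.erase e1, ∑ j ∈ Finset.univ.erase e1, Rt i j ^ 2
      = (A / c) ^ 2 * c
        + B ^ 2 * ∑ i ∈ Finset.univ.erase e1, ∑ j ∈ Finset.univ.erase e1, (W i e1 j e1) ^ 2 := by
    rw [Finset.sum_congr rfl (fun i hi => Finset.sum_congr rfl (fun j hj => key2 i hi j hj))]
    simp only [Finset.sum_add_distrib, ← Finset.mul_sum]
    have h1 : ∀ i ∈ Finset.univ.erase e1,
        ∑ j ∈ Finset.univ.erase e1, (if i = j then (1:ℝ) else 0) = 1 := by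
      intro i hi
      rw [Finset.sum_ite_eq]
      simp [hi]
    have h2 : ∀ i ∈ Finset.univ.erase e1,
        ∑ j ∈ Finset.univ.erase e1, ((if i = j then (1:ℝ) else 0) * W i e1 j e1)
          = W i e1 i e1 := by
      intro i hi
      simp only [ite_mul, one_mul, zero_mul]
      rw [Finset.sum_ite_eq]
      simp [hi]
    rw [Finset.sum_congr rfl h1, Finset.sum_congr rfl h2]
    rw [Finset.sum_const, nsmul_eq_mul, hdiag, hcard]
    ring
  -- split the full sum
  have split : ∑ i, ∑ j, (Rt i j) ^ 2
      = A ^ 2 + ∑ i ∈ Finset.univ.erase e1, ∑ j ∈ Finset.univ.erase e1, Rt i j ^ 2 := by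
    rw [← Finset.add_sum_erase _ _ (Finset.mem_univ e1)]
    have he1 : ∑ j, Rt e1 j ^ 2 = A ^ 2 := by
      rw [← Finset.add_sum_erase _ _ (Finset.mem_univ e1)]
      have : ∑ j ∈ Finset.univ.erase e1, Rt e1 j ^ 2 = 0 :=
        Finset.sum_eq_zero fun j hj => by rw [h1a j (Finset.ne_of_mem_erase hj)]; ring
      rw [this]; simp [hA]
    rw [he1]
    congr 1
    refine Finset.sum_congr rfl fun i hi => ?_
    rw [← Finset.add_sum_erase _ _ (Finset.mem_univ e1),
      hrow i (Finset.ne_of_mem_erase hi)]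
    ring
  rw [split, hblock, hS]
  have : (A / c) ^ 2 * c = A ^ 2 / c := by field_simp
  rw [this]
  rw [hB, hcdef]
  field_simp [show (n:ℝ) - 1 ≠ 0 from hc]
  ring
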